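/- For all A, B ∈ Sym and integers r ≥ 1, s ≥ 0 with r + s ≤ n − 1, the trace of the mixed Newton tensor satisfies tr(T_{r,s}(A,B)) = (r·(n − (r+s))/(r+s)) · P_{r−1,s}(A,B). (This identity is used in the proof of the weighted spacetime Minkowski formulas for mixed higher order mean curvatures.) -/

import Mathlib

open Matrix Finset

noncomputable section

/-- The mixed Newton tensor `T_{r,s}(A,B)`, whose `(a,b)` entry is the partial
derivative `∂P_{r,s}(A,B)/∂A_{ab}`, the derivative being taken over the space of all
real `(n-1)×(n-1)` matrices. -/
def newtonTensorA {m : ℕ}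
    (P : Matrix (Fin m) (Fin m) ℝ → Matrix (Fin m) (Fin m) ℝ → ℕ → ℕ → ℝ)
    (A B : Matrix (Fin m) (Fin m) ℝ) (r s : ℕ) : Matrix (Fin m) (Fin m) ℝ :=
  Matrix.of fun a b =>
    deriv (fun t : ℝ => P (A + t • Matrix.single a b (1 : ℝ)) B r s) 0

open Polynomial in

/-- coefficient extraction, one variable -/
lemma myExt1 (n : ℕ) (f g : ℕ → ℝ)
    (h : ∀ y : ℝ, ∑ r ∈ range n, y ^ r * f r = ∑ r ∈ range n, y ^ r * g r)
    {r : ℕ} (hr : r < n) : f r = g r := by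
  have hpq : (∑ i ∈ range n, Polynomial.monomial i (f i)) =
      ∑ i ∈ range n, Polynomial.monomial i (g i) := by
    apply Polynomial.funext
    intro y
    simpa [Polynomial.eval_finset_sum, Polynomial.eval_monomial, mul_comm] using h y
  have := congrArg (fun p => Polynomial.coeff p r) hpq
  simpa [Polynomial.finset_sum_coeff, Polynomial.coeff_monomial,
    Finset.sum_ite_eq' (range n) r, hr] using this

/-- coefficient extraction, two variables over a triangular range -/
lemma myExt2 (n : ℕ) (f g : ℕ → ℕ → ℝ)
    (h : ∀ y z : ℝ, ∑ r ∈ range n, ∑ s ∈ range (n - r), y ^ r * z ^ s * f r s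
      = ∑ r ∈ range n, ∑ s ∈ range (n - r), y ^ r * z ^ s * g r s)
    {r s : ℕ} (hr : r < n) (hs : s < n - r) : f r s = g r s := by
  have h1 : ∀ z : ℝ, (fun r => ∑ s ∈ range (n - r), z ^ s * f r s) r
      = (fun r => ∑ s ∈ range (n - r), z ^ s * g r s) r := by
    intro z
    apply myExt1 n _ _ _ hr
    intro y
    simpa [Finset.mul_sum, mul_assoc, mul_left_comm] using h y z
  apply myExt1 (n - r) (fun s => f r s) (fun s => g r s) _ hs
  intro z
  simpa using h1 z

lemma det_add_smul_stdBasis {m : ℕ} (M : Matrix (Fin m) (Fin m) ℝ) (a : Fin m) (c : ℝ) :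
    (M + c • Matrix.single a a (1 : ℝ)).det
      = M.det + c * (M.updateRow a (Pi.single a 1)).det := by
  have hM : M + c • Matrix.single a a (1 : ℝ)
      = M.updateRow a (M a + c • (Pi.single a 1 : Fin m → ℝ)) := by
    ext i j
    by_cases hi : i = a
    · subst hi
      simp [Matrix.updateRow_self, Matrix.single, Pi.single_apply, eq_comm]
    · simp only [Matrix.add_apply, Matrix.smul_apply, Matrix.single,
        Matrix.updateRow_ne hi, Matrix.of_apply, smul_eq_mul]
      rw [if_neg (by tauto), mul_zero, add_zero]
  rw [hM, Matrix.det_updateRow_add, Matrix.det_updateRow_smul, Matrix.updateRow_eq_self]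

/-- Jacobi-style derivative of `t ↦ det (M + t • N)` at `0`. -/
lemma hasDerivAt_det_add_smul {m : ℕ} (M N : Matrix (Fin m) (Fin m) ℝ) :
    HasDerivAt (fun t : ℝ => (M + t • N).det)
      (∑ a, (M.updateRow a (N a)).det) 0 := by
  classical
  set MS : Finset (Fin m) → ℝ → Matrix (Fin m) (Fin m) ℝ :=
    fun S t => Matrix.of fun i j => M i j + (if i ∈ S then t * N i j else 0) with hMS
  have hMS0 : ∀ S, MS S 0 = M := by
    intro S; ext i j; simp [hMS]
  have hMScont : ∀ S, Continuous fun t => MS S t := by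
    intro S
    apply continuous_matrix
    intro i j
    by_cases hi : i ∈ S <;> simp [hMS, hi] <;> fun_prop
  have key : ∀ S : Finset (Fin m), ∃ g : ℝ → ℝ, Continuous g ∧
      g 0 = (∑ a ∈ S, (M.updateRow a (N a)).det) ∧
      ∀ t, (MS S t).det = M.det + t * g t := by
    intro S
    induction S using Finset.induction_on with
    | empty =>
      refine ⟨fun _ => 0, continuous_const, by simp, ?_⟩
      intro t
      have : MS ∅ t = M := by ext i j; simp [hMS]
      simp [this]
    | @insert a S ha ih =>
      obtain ⟨g, hgc, hg0, hgt⟩ := ih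
      refine ⟨fun t => g t + ((MS S t).updateRow a (N a)).det, ?_, ?_, ?_⟩
      · exact hgc.add ((hMScont S).matrix_updateRow a continuous_const).matrix_det
      · show g 0 + ((MS S 0).updateRow a (N a)).det = _
        rw [hg0, hMS0, Finset.sum_insert ha]; ring
      · intro t
        have h1 : MS (insert a S) t = (MS S t).updateRow a (fun j => M a j + t * N a j) := by
          ext i j
          by_cases hi : i = a
          · subst hi; simp [hMS, Matrix.updateRow_self]
          · simp [hMS, Matrix.updateRow_ne hi, hi]
        have h2 : (MS S t).updateRow a (M a) = MS S t := by
          have : M a = MS S t a := by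
            funext j; simp [hMS, ha]
          rw [this, Matrix.updateRow_eq_self]
        have h3 : (fun j => M a j + t * N a j) = (M a + t • N a) := by
          funext j; simp
        rw [h1, h3, Matrix.det_updateRow_add, Matrix.det_updateRow_smul, h2, hgt]
        ring
  obtain ⟨g, hgc, hg0, hgt⟩ := key Finset.univ
  have huniv : ∀ t : ℝ, M + t • N = MS Finset.univ t := by
    intro t; ext i j; simp [hMS]
  rw [hasDerivAt_iff_tendsto_slope]
  have hslope : ∀ t : ℝ, t ≠ 0 → slope (fun t : ℝ => (M + t • N).det) 0 t = g t := by
    intro t ht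
    rw [slope_def_field]
    rw [huniv t, hgt t, huniv 0, hgt 0]
    field_simp
    ring
  rw [← hg0]
  apply Filter.Tendsto.congr' _ (hgc.continuousAt.tendsto.mono_left nhdsWithin_le_nhds)
  filter_upwards [self_mem_nhdsWithin] with t ht
  exact (hslope t ht).symm

theorem trace_key {m : ℕ}
    (P : Matrix (Fin m) (Fin m) ℝ → Matrix (Fin m) (Fin m) ℝ → ℕ → ℕ → ℝ)
    (hP : ∀ (A B : Matrix (Fin m) (Fin m) ℝ) (y z : ℝ),
      (1 + y • A + z • B).det =
        ∑ R ∈ Finset.range (m + 1), ∑ σ ∈ Finset.range (m + 1 - R),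
          (((R + σ).factorial : ℝ) / ((R.factorial : ℝ) * (σ.factorial : ℝ))) *
            y ^ R * z ^ σ * P A B R σ)
    (A B : Matrix (Fin m) (Fin m) ℝ)
    (r s : ℕ) (hr : 1 ≤ r) (hrs : r + s ≤ m) :
    (newtonTensorA P A B r s).trace =
      (r : ℝ) * (((m : ℝ) + 1) - ((r : ℝ) + (s : ℝ))) / ((r : ℝ) + (s : ℝ)) *
        P A B (r - 1) s := by
  classical
  set c : ℕ → ℕ → ℝ :=
    fun R σ => (((R + σ).factorial : ℝ) / ((R.factorial : ℝ) * (σ.factorial : ℝ))) with hc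
  have hc0 : ∀ R σ, c R σ ≠ 0 := by
    intro R σ
    have h1 : (0:ℝ) < ((R + σ).factorial : ℝ) := by positivity
    have h2 : (0:ℝ) < (R.factorial : ℝ) := by positivity
    have h3 : (0:ℝ) < (σ.factorial : ℝ) := by positivity
    simp only [hc]
    positivity
  set E : Fin m → Matrix (Fin m) (Fin m) ℝ := fun a => Matrix.single a a 1 with hE
  set D : Fin m → ℝ → ℝ → ℝ :=
    fun a y z => ((1 + y • A + z • B).updateRow a (Pi.single a 1)).det with hD
  -- per-direction determinant identity
  have detEq : ∀ (a : Fin m) (t y z : ℝ),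
      (1 + y • (A + t • E a) + z • B).det
        = (1 + y • A + z • B).det + (t * y) * D a y z := by
    intro a t y z
    have hmat : 1 + y • (A + t • E a) + z • B
        = (1 + y • A + z • B) + (t * y) • Matrix.single a a (1:ℝ) := by
      ext i j
      simp [hE, Matrix.add_apply, Matrix.smul_apply, Matrix.one_apply, mul_comm, mul_left_comm]
      ring
    rw [hmat, det_add_smul_stdBasis]
  -- hP rewritten: the double sum identities
  have hPS : ∀ (A' : Matrix (Fin m) (Fin m) ℝ) (y z : ℝ),
      (1 + y • A' + z • B).det =
        ∑ R ∈ Finset.range (m + 1), ∑ σ ∈ Finset.range (m + 1 - R),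
          c R σ * y ^ R * z ^ σ * P A' B R σ := fun A' y z => hP A' B y z
  -- `K a R σ` is the slope of `t ↦ P (A + t • E a) B R σ`
  set K : Fin m → ℕ → ℕ → ℝ :=
    fun a R σ => P (A + E a) B R σ - P A B R σ with hK
  -- sum identity for the slope at `t = 1`
  have slopeSum : ∀ (a : Fin m) (y z : ℝ),
      (∑ R ∈ Finset.range (m + 1), ∑ σ ∈ Finset.range (m + 1 - R),
          c R σ * y ^ R * z ^ σ * K a R σ) = y * D a y z := by
    intro a y z
    have e1 : (∑ R ∈ Finset.range (m + 1), ∑ σ ∈ Finset.range (m + 1 - R),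
        c R σ * y ^ R * z ^ σ * P (A + E a) B R σ)
          = (1 + y • A + z • B).det + y * D a y z := by
      have h1 := (hPS (A + E a) y z).symm
      have h2 := detEq a 1 y z
      rw [one_smul] at h2
      rw [← h1] at h2 -- h2 : sum = det + (1*y)*D
      rw [h2]; ring
    have e0 := (hPS A y z).symm
    have split : (∑ R ∈ Finset.range (m + 1), ∑ σ ∈ Finset.range (m + 1 - R),
        c R σ * y ^ R * z ^ σ * K a R σ)
        = (∑ R ∈ Finset.range (m + 1), ∑ σ ∈ Finset.range (m + 1 - R),
            c R σ * y ^ R * z ^ σ * P (A + E a) B R σ)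
          - (∑ R ∈ Finset.range (m + 1), ∑ σ ∈ Finset.range (m + 1 - R),
            c R σ * y ^ R * z ^ σ * P A B R σ) := by
      rw [← Finset.sum_sub_distrib]
      apply Finset.sum_congr rfl; intro R _
      rw [← Finset.sum_sub_distrib]
      apply Finset.sum_congr rfl; intro σ _
      simp only [hK]; ring
    rw [split, e1, ← e0]; ring
  -- Claim 1: `t ↦ P (A + t•E a) B r s` is affine
  have affine : ∀ (a : Fin m) (t : ℝ),
      P (A + t • E a) B r s = P A B r s + t * K a r s := by
    intro a t
    have hrm : r < m + 1 := by omega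
    have hsm : s < m + 1 - r := by omega
    have := myExt2 (m + 1)
      (fun R σ => c R σ * P (A + t • E a) B R σ)
      (fun R σ => c R σ * (P A B R σ + t * K a R σ)) ?_ hrm hsm
    · exact mul_left_cancel₀ (hc0 r s) this
    intro y z
    have lhs1 : (∑ R ∈ Finset.range (m + 1), ∑ σ ∈ Finset.range (m + 1 - R),
        y ^ R * z ^ σ * (c R σ * P (A + t • E a) B R σ))
        = (1 + y • A + z • B).det + (t * y) * D a y z := by
      have h1 := (hPS (A + t • E a) y z).symm
      have h2 := detEq a t y z
      rw [← h1] at h2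
      rw [← h2]
      apply Finset.sum_congr rfl; intro R _
      apply Finset.sum_congr rfl; intro σ _
      ring
    have rhs1 : (∑ R ∈ Finset.range (m + 1), ∑ σ ∈ Finset.range (m + 1 - R),
        y ^ R * z ^ σ * (c R σ * (P A B R σ + t * K a R σ)))
        = (1 + y • A + z • B).det + (t * y) * D a y z := by
      have e0 := (hPS A y z).symm
      have eK := slopeSum a y z
      have split : (∑ R ∈ Finset.range (m + 1), ∑ σ ∈ Finset.range (m + 1 - R),
          y ^ R * z ^ σ * (c R σ * (P A B R σ + t * K a R σ)))
          = (∑ R ∈ Finset.range (m + 1), ∑ σ ∈ Finset.range (m + 1 - R),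
              c R σ * y ^ R * z ^ σ * P A B R σ)
            + t * (∑ R ∈ Finset.range (m + 1), ∑ σ ∈ Finset.range (m + 1 - R),
              c R σ * y ^ R * z ^ σ * K a R σ) := by
        rw [Finset.mul_sum, ← Finset.sum_add_distrib]
        apply Finset.sum_congr rfl; intro R _
        rw [Finset.mul_sum, ← Finset.sum_add_distrib]
        apply Finset.sum_congr rfl; intro σ _
        ring
      rw [split, ← e0, eK]; ring
    rw [lhs1, rhs1]
  -- trace as sum of slopes
  have htr : (newtonTensorA P A B r s).trace = ∑ a, K a r s := by
    unfold newtonTensorA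
    rw [Matrix.trace]
    apply Finset.sum_congr rfl; intro a _
    have hfun : (fun t : ℝ => P (A + t • Matrix.single a a (1:ℝ)) B r s)
        = fun t : ℝ => P A B r s + t * K a r s := by
      funext t; exact affine a t
    show deriv (fun t : ℝ => P (A + t • Matrix.single a a (1:ℝ)) B r s) 0 = K a r s
    rw [hfun]
    have : HasDerivAt (fun t : ℝ => P A B r s + t * K a r s) (K a r s) 0 := by
      simpa using ((hasDerivAt_id (0:ℝ)).mul_const (K a r s)).const_add (P A B r s)
    exact this.deriv
  -- the target coefficient function
  set h : ℕ → ℕ → ℝ := fun R σ =>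
    if R = 0 then 0 else c (R - 1) σ * ((m : ℝ) - (R - 1 : ℕ) - σ) * P A B (R - 1) σ with hh
  have hrm : r < m + 1 := by omega
  have hsm : s < m + 1 - r := by omega
  have keyId : ∀ y z : ℝ,
      ∑ R ∈ Finset.range (m + 1), ∑ σ ∈ Finset.range (m + 1 - R),
          y ^ R * z ^ σ * (c R σ * ∑ a, K a R σ)
        = ∑ R ∈ Finset.range (m + 1), ∑ σ ∈ Finset.range (m + 1 - R),
          y ^ R * z ^ σ * h R σ := by
    intro y z
    -- LHS equals `∑ a, y * D a y z`
    have lhsEq : (∑ R ∈ Finset.range (m + 1), ∑ σ ∈ Finset.range (m + 1 - R),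
        y ^ R * z ^ σ * (c R σ * ∑ a, K a R σ)) = ∑ a, y * D a y z := by
      calc (∑ R ∈ Finset.range (m + 1), ∑ σ ∈ Finset.range (m + 1 - R),
          y ^ R * z ^ σ * (c R σ * ∑ a, K a R σ))
          = ∑ R ∈ Finset.range (m + 1), ∑ a, (∑ σ ∈ Finset.range (m + 1 - R),
              c R σ * y ^ R * z ^ σ * K a R σ) := by
            apply Finset.sum_congr rfl; intro R _
            rw [Finset.sum_comm]
            apply Finset.sum_congr rfl; intro σ _
            rw [Finset.mul_sum, Finset.mul_sum]
            apply Finset.sum_congr rfl; intro a _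
            ring
        _ = ∑ a, ∑ R ∈ Finset.range (m + 1), (∑ σ ∈ Finset.range (m + 1 - R),
              c R σ * y ^ R * z ^ σ * K a R σ) := Finset.sum_comm
        _ = ∑ a, y * D a y z := by
            apply Finset.sum_congr rfl; intro a _
            exact slopeSum a y z
    rw [lhsEq]
    -- Jacobi-type derivative
    have jac : HasDerivAt
        (fun t : ℝ => ((1 + y • A + z • B) + t • (y • (1 : Matrix (Fin m) (Fin m) ℝ))).det)
        (∑ a, y * D a y z) 0 := by
      have hjac := hasDerivAt_det_add_smul (1 + y • A + z • B)
        (y • (1 : Matrix (Fin m) (Fin m) ℝ))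
      have hrow : ∀ a : Fin m,
          ((1 + y • A + z • B).updateRow a ((y • (1 : Matrix (Fin m) (Fin m) ℝ)) a)).det
            = y * D a y z := by
        intro a
        have : (y • (1 : Matrix (Fin m) (Fin m) ℝ)) a = y • (Pi.single a 1 : Fin m → ℝ) := by
          funext j
          simp [Matrix.one_apply, Pi.single_apply, eq_comm]
        rw [this, Matrix.det_updateRow_smul]
      rw [Finset.sum_congr rfl (fun a _ => hrow a)] at hjac
      exact hjac
    -- scaling identity near 0
    have h0mem : {t : ℝ | 1 + t * y ≠ 0} ∈ nhds (0 : ℝ) := by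
      have hopen : IsOpen {t : ℝ | 1 + t * y ≠ 0} := by
        have : {t : ℝ | 1 + t * y ≠ 0} = (fun t : ℝ => 1 + t * y) ⁻¹' ({0}ᶜ) := rfl
        rw [this]
        exact isOpen_compl_singleton.preimage (by fun_prop)
      exact hopen.mem_nhds (by simp)
    have scaling : (fun t : ℝ =>
        ((1 + y • A + z • B) + t • (y • (1 : Matrix (Fin m) (Fin m) ℝ))).det)
          =ᶠ[nhds (0:ℝ)] (fun t : ℝ =>
        ∑ R ∈ Finset.range (m + 1), ∑ σ ∈ Finset.range (m + 1 - R),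
          c R σ * y ^ R * z ^ σ * (1 + t * y) ^ (m - R - σ) * P A B R σ) := by
      filter_upwards [h0mem] with t ht
      set u : ℝ := 1 + t * y with hu
      have hu0 : u ≠ 0 := ht
      have hmat : u • (1 + (y / u) • A + (z / u) • B)
          = (1 + y • A + z • B) + t • (y • (1 : Matrix (Fin m) (Fin m) ℝ)) := by
        ext i j
        simp [Matrix.add_apply, Matrix.smul_apply, Matrix.one_apply, mul_add]
        by_cases hij : i = j <;> simp [hij] <;> field_simp <;> ring
      have hdet : (u • (1 + (y / u) • A + (z / u) • B)).det
          = u ^ m * (1 + (y / u) • A + (z / u) • B).det := by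
        rw [Matrix.det_smul]
        simp [Fintype.card_fin]
      have hsub := hPS A (y / u) (z / u)
      calc ((1 + y • A + z • B) + t • (y • (1 : Matrix (Fin m) (Fin m) ℝ))).det
          = u ^ m * (1 + (y / u) • A + (z / u) • B).det := by rw [← hmat, hdet]
        _ = u ^ m * ∑ R ∈ Finset.range (m + 1), ∑ σ ∈ Finset.range (m + 1 - R),
              c R σ * (y / u) ^ R * (z / u) ^ σ * P A B R σ := by rw [hsub]
        _ = ∑ R ∈ Finset.range (m + 1), ∑ σ ∈ Finset.range (m + 1 - R),
              c R σ * y ^ R * z ^ σ * u ^ (m - R - σ) * P A B R σ := by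
            rw [Finset.mul_sum]
            apply Finset.sum_congr rfl; intro R hR
            rw [Finset.mul_sum]
            apply Finset.sum_congr rfl; intro σ hσ
            have hR' : R < m + 1 := Finset.mem_range.mp hR
            have hσ' : σ < m + 1 - R := Finset.mem_range.mp hσ
            have hupow : u ^ m = u ^ (m - R - σ) * (u ^ R * u ^ σ) := by
              rw [← pow_add, ← pow_add]
              congr 1
              omega
            rw [div_pow, div_pow, hupow]
            field_simp
    -- derivative of the scaled expansion
    have poly : HasDerivAt (fun t : ℝ =>
        ∑ R ∈ Finset.range (m + 1), ∑ σ ∈ Finset.range (m + 1 - R),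
          c R σ * y ^ R * z ^ σ * (1 + t * y) ^ (m - R - σ) * P A B R σ)
        (∑ R ∈ Finset.range (m + 1), ∑ σ ∈ Finset.range (m + 1 - R),
          c R σ * y ^ R * z ^ σ * (((m - R - σ : ℕ) : ℝ) * y) * P A B R σ) 0 := by
      apply HasDerivAt.fun_sum; intro R _
      apply HasDerivAt.fun_sum; intro σ _
      have base : HasDerivAt (fun t : ℝ => 1 + t * y) y 0 := by
        simpa using ((hasDerivAt_id (0:ℝ)).mul_const y).const_add 1
      have hpow := base.fun_pow (m - R - σ)
      have h2 := (hpow.const_mul (c R σ * y ^ R * z ^ σ)).mul_const (P A B R σ)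
      refine h2.congr_deriv ?_
      norm_num
    -- uniqueness of derivatives
    have poly' := poly.congr_of_eventuallyEq scaling
    have huniq := jac.unique poly'
    rw [huniq]
    -- reindex
    have fTop : (∑ σ ∈ Finset.range (m + 1 - m),
        c m σ * y ^ m * z ^ σ * (((m - m - σ : ℕ) : ℝ) * y) * P A B m σ) = 0 := by
      simp
    have g0 : (∑ σ ∈ Finset.range (m + 1 - 0), y ^ 0 * z ^ σ * h 0 σ) = 0 := by
      simp [hh]
    calc (∑ R ∈ Finset.range (m + 1), ∑ σ ∈ Finset.range (m + 1 - R),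
        c R σ * y ^ R * z ^ σ * (((m - R - σ : ℕ) : ℝ) * y) * P A B R σ)
        = ∑ R ∈ Finset.range m, ∑ σ ∈ Finset.range (m + 1 - R),
            c R σ * y ^ R * z ^ σ * (((m - R - σ : ℕ) : ℝ) * y) * P A B R σ := by
          rw [Finset.sum_range_succ, fTop, add_zero]
      _ = ∑ R ∈ Finset.range m, ∑ σ ∈ Finset.range (m + 1 - (R + 1)),
            y ^ (R + 1) * z ^ σ * h (R + 1) σ := by
          apply Finset.sum_congr rfl; intro i hi
          have him : i < m := Finset.mem_range.mp hi
          have hrange : m + 1 - i = (m - i) + 1 := by omega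
          have hrange2 : m + 1 - (i + 1) = m - i := by omega
          rw [hrange, hrange2, Finset.sum_range_succ]
          have htop : c i (m - i) * y ^ i * z ^ (m - i) *
              (((m - i - (m - i) : ℕ) : ℝ) * y) * P A B i (m - i) = 0 := by
            simp
          rw [htop, add_zero]
          apply Finset.sum_congr rfl; intro σ hσ
          have hσ' : σ < m - i := Finset.mem_range.mp hσ
          have hcast : ((m - i - σ : ℕ) : ℝ) = (m : ℝ) - (i : ℕ) - σ := by
            have : ((m - i - σ : ℕ) : ℝ) = ((m : ℕ) : ℝ) - ((i : ℕ) : ℝ) - ((σ : ℕ) : ℝ) := by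
              rw [Nat.cast_sub (by omega), Nat.cast_sub (by omega)]
            simpa using this
          rw [hh]
          simp only [Nat.add_sub_cancel, if_neg (Nat.succ_ne_zero i)]
          rw [hcast]
          ring
      _ = ∑ R ∈ Finset.range (m + 1), ∑ σ ∈ Finset.range (m + 1 - R),
            y ^ R * z ^ σ * h R σ := by
          rw [Finset.sum_range_succ' (fun R => ∑ σ ∈ Finset.range (m + 1 - R),
            y ^ R * z ^ σ * h R σ) m, g0, add_zero]
  -- extract the coefficient
  have hext := myExt2 (m + 1) (fun R σ => c R σ * ∑ a, K a R σ) h keyId hrm hsm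
  rw [htr]
  obtain ⟨r', rfl⟩ : ∃ r', r = r' + 1 := ⟨r - 1, by omega⟩
  simp only [hh, Nat.add_sub_cancel, if_neg (Nat.succ_ne_zero r')] at hext
  -- final arithmetic
  have hsum : ∑ a, K a (r' + 1) s
      = c r' s * ((m : ℝ) - (r' : ℕ) - s) * P A B r' s / c (r' + 1) s := by
    rw [← hext]
    field_simp [hc0]
  rw [hsum]
  simp only [hc, Nat.add_sub_cancel]
  have hfact1 : (((r' + 1 + s).factorial : ℕ) : ℝ)
      = ((r' + s : ℕ) + 1 : ℝ) * ((r' + s).factorial : ℕ) := by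
    have : r' + 1 + s = (r' + s) + 1 := by omega
    rw [this, Nat.factorial_succ]
    push_cast
    ring
  have hfact2 : (((r' + 1).factorial : ℕ) : ℝ) = ((r' : ℕ) + 1 : ℝ) * (r'.factorial : ℕ) := by
    rw [Nat.factorial_succ]
    push_cast
    ring
  rw [hfact1, hfact2]
  have p1 : (0:ℝ) < ((r' + s).factorial : ℕ) := by positivity
  have p2 : (0:ℝ) < (r'.factorial : ℕ) := by positivity
  have p3 : (0:ℝ) < (s.factorial : ℕ) := by positivity
  have p4 : ((r' : ℝ) + (s : ℝ)) + 1 ≠ 0 := by positivity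
  have p5 : ((r' : ℝ) + 1) + (s : ℝ) ≠ 0 := by positivity
  push_cast
  field_simp
  ring

/-- **Trace identity:** for `r ≥ 1`,
`tr(T_{r,s}(A,B)) = (r·(n-(r+s))/(r+s)) · P_{r-1,s}(A,B)`. -/
theorem newton_tensor_trace_A (n : ℕ) (hn : 3 ≤ n)
    (P : Matrix (Fin (n - 1)) (Fin (n - 1)) ℝ → Matrix (Fin (n - 1)) (Fin (n - 1)) ℝ →
      ℕ → ℕ → ℝ)
    (hP : ∀ (A B : Matrix (Fin (n - 1)) (Fin (n - 1)) ℝ) (y z : ℝ),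
      (1 + y • A + z • B).det =
        ∑ r ∈ Finset.range n, ∑ s ∈ Finset.range (n - r),
          (((r + s).factorial : ℝ) / ((r.factorial : ℝ) * (s.factorial : ℝ))) *
            y ^ r * z ^ s * P A B r s)
    (A B : Matrix (Fin (n - 1)) (Fin (n - 1)) ℝ)
    (hA : A.IsHermitian) (hB : B.IsHermitian)
    (r s : ℕ) (hr : 1 ≤ r) (hrs : r + s ≤ n - 1) :
    (newtonTensorA P A B r s).trace =
      (r : ℝ) * ((n : ℝ) - ((r : ℝ) + (s : ℝ))) / ((r : ℝ) + (s : ℝ)) *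
        P A B (r - 1) s := by
  obtain ⟨m, rfl⟩ : ∃ m, n = m + 1 := ⟨n - 1, by omega⟩
  simp only [Nat.add_sub_cancel] at *
  have key := trace_key P hP A B r s hr (by omega)
  push_cast at key ⊢
  convert key using 2
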